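/- If P⁰ ≻_{P*} P¹ (P¹ is reachable from P⁰ in the Markov order with equilibrium P*) then P¹ ∈ P⁰ + Q(P⁰,P*), i.e., P¹ − P⁰ lies in the cone of possible Markov velocities at P⁰. -/

import Mathlib

/-- `P¹` is reachable from `P⁰` by (the time-one map of) a Markov chain with
equilibrium `P*`. -/
def MarkovPre {n : ℕ} (ps : Fin n → ℝ) (P0 P1 : Fin n → ℝ) : Prop :=
  ∃ q : Fin n → Fin n → ℝ,
    (∀ i j, i ≠ j → 0 ≤ q i j) ∧ (∀ i, q i i = 0) ∧
    (∀ i, ∑ j ∈ Finset.univ.erase i, q i j * ps j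
      = (∑ j ∈ Finset.univ.erase i, q j i) * ps i) ∧
    ∃ p : ℝ → Fin n → ℝ, p 0 = P0 ∧ p 1 = P1 ∧
      ∀ t ∈ Set.Icc (0 : ℝ) 1, ∀ i, HasDerivAt (fun s => p s i)
        (∑ j ∈ Finset.univ.erase i, (q i j * p t j - q j i * p t i)) t

/-- The (global) Markov order with equilibrium `P*`: the closed transitive
closure of `MarkovPre`. -/
def MarkovOrder {n : ℕ} (ps : Fin n → ℝ) (P0 P1 : Fin n → ℝ) : Prop :=
  (P0, P1) ∈ closure {pr : (Fin n → ℝ) × (Fin n → ℝ) |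
    Relation.TransGen (MarkovPre ps) pr.1 pr.2}

namespace MOAux


noncomputable def phi (ε x : ℝ) : ℝ := (x + Real.sqrt (x^2 + ε^2)) / 2
noncomputable def phi' (ε x : ℝ) : ℝ := (1 + x / Real.sqrt (x^2 + ε^2)) / 2

lemma sq_sqrt_aux (ε x : ℝ) (hε : ε ≠ 0) :
    Real.sqrt (x^2 + ε^2) ^ 2 = x^2 + ε^2 := Real.sq_sqrt (by positivity)

lemma sqrt_pos_aux (ε x : ℝ) (hε : ε ≠ 0) : 0 < Real.sqrt (x^2 + ε^2) :=
  Real.sqrt_pos.2 (by positivity)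

lemma phi_hasDerivAt (ε : ℝ) (hε : ε ≠ 0) (x : ℝ) :
    HasDerivAt (phi ε) (phi' ε x) x := by
  have hne : x^2 + ε^2 ≠ 0 := by positivity
  have h1 : HasDerivAt (fun x : ℝ => x^2 + ε^2) (2*x) x := by
    simpa using ((hasDerivAt_pow 2 x).add_const (ε^2))
  have h2 : HasDerivAt (fun x : ℝ => Real.sqrt (x^2 + ε^2))
      (1 / (2 * Real.sqrt (x^2 + ε^2)) * (2*x)) x :=
    (Real.hasDerivAt_sqrt hne).comp x h1
  have h3 : HasDerivAt (fun x : ℝ => x + Real.sqrt (x^2 + ε^2))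
      (1 + 1 / (2 * Real.sqrt (x^2 + ε^2)) * (2*x)) x := (hasDerivAt_id x).add h2
  have h4 := h3.div_const 2
  refine h4.congr_deriv ?_
  have hs := sqrt_pos_aux ε x hε
  rw [phi']
  field_simp

lemma phi_grad (ε : ℝ) (hε : ε ≠ 0) (x y : ℝ) :
    phi ε x + phi' ε x * (y - x) ≤ phi ε y := by
  set sx := Real.sqrt (x^2 + ε^2) with hsx
  set sy := Real.sqrt (y^2 + ε^2) with hsy
  have hsxp : 0 < sx := sqrt_pos_aux ε x hε
  have hsyp : 0 < sy := sqrt_pos_aux ε y hε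
  have hsx2 : sx^2 = x^2 + ε^2 := sq_sqrt_aux ε x hε
  have hsy2 : sy^2 = y^2 + ε^2 := sq_sqrt_aux ε y hε
  have hkey : x*y + ε^2 ≤ sx * sy := by
    have h1 : (x*y + ε^2)^2 ≤ (sx*sy)^2 := by
      have : (sx*sy)^2 = (x^2+ε^2) * (y^2+ε^2) := by rw [mul_pow, hsx2, hsy2]
      rw [this]; nlinarith [sq_nonneg (ε*(x-y))]
    have h2 : x*y + ε^2 ≤ |x*y + ε^2| := le_abs_self _
    calc x*y + ε^2 ≤ |x*y+ε^2| := h2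
      _ ≤ sx*sy := by
          rw [← Real.sqrt_sq_eq_abs, ← Real.sqrt_sq (by positivity : (0:ℝ) ≤ sx*sy)]
          exact Real.sqrt_le_sqrt h1
  rw [phi, phi, phi']
  have hgoal : (x + sx)/2 + (1 + x/sx)/2 * (y - x) = ((x+sx)*sx + (sx+x)*(y-x)) / (2*sx) := by
    field_simp
  rw [hgoal, div_le_div_iff₀ (by positivity) two_pos]
  nlinarith [hkey, hsx2, hsxp]



lemma phi_bounds (ε : ℝ) (hε : 0 ≤ ε) (x : ℝ) :
    max x 0 ≤ phi ε x ∧ phi ε x ≤ max x 0 + ε := by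
  have h1 : |x| ≤ Real.sqrt (x^2 + ε^2) := by
    rw [← Real.sqrt_sq_eq_abs]
    exact Real.sqrt_le_sqrt (by nlinarith)
  have h2 : Real.sqrt (x^2 + ε^2) ≤ |x| + ε := by
    rw [← Real.sqrt_sq (by positivity : (0:ℝ) ≤ |x| + ε)]
    exact Real.sqrt_le_sqrt (by nlinarith [abs_nonneg x, sq_abs x])
  have h3 : max x 0 = (x + |x|)/2 := by
    rcases le_total x 0 with h | h
    · rw [max_eq_right h, abs_of_nonpos h]; ring
    · rw [max_eq_left h, abs_of_nonneg h]; ring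
  rw [phi, h3]
  constructor <;> linarith

lemma dissipation {n : ℕ} (ps : Fin n → ℝ) (hps : ∀ i, 0 < ps i)
    (q : Fin n → Fin n → ℝ) (hq : ∀ i j, i ≠ j → 0 ≤ q i j) (hqd : ∀ i, q i i = 0)
    (hbal : ∀ i, ∑ j ∈ Finset.univ.erase i, q i j * ps j
      = (∑ j ∈ Finset.univ.erase i, q j i) * ps i)
    (x : Fin n → ℝ) (f g : Fin n → ℝ)
    (hfg : ∀ i j, f i * (x j / ps j - x i / ps i) ≤ g j - g i) :
    ∑ i, f i * (∑ j ∈ Finset.univ.erase i, (q i j * x j - q j i * x i)) ≤ 0 := by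
  have hps' : ∀ i, ps i ≠ 0 := fun i => (hps i).ne'
  have hann : ∀ i j, 0 ≤ q i j * ps j := by
    intro i j
    rcases eq_or_ne i j with h | h
    · subst h; simp [hqd i]
    · exact mul_nonneg (hq i j h) (hps j).le
  have herase : ∀ i, ∑ j ∈ Finset.univ.erase i, (q i j * x j - q j i * x i)
      = ∑ j, (q i j * x j - q j i * x i) := by
    intro i
    exact Finset.sum_erase _ (by ring)
  have hcol : ∀ i, ∑ j, q j i * ps i = ∑ j, q i j * ps j := by
    intro i
    have h1 : ∑ j ∈ Finset.univ.erase i, q i j * ps j = ∑ j, q i j * ps j :=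
      Finset.sum_erase _ (by simp [hqd i])
    have h2 : (∑ j ∈ Finset.univ.erase i, q j i) * ps i = ∑ j, q j i * ps i := by
      rw [Finset.sum_mul]
      exact Finset.sum_erase _ (by simp [hqd i])
    rw [← h1, ← h2, hbal i]
  have key : ∀ i, f i * (∑ j, (q i j * x j - q j i * x i))
      = ∑ j, (q i j * ps j) * (f i * (x j / ps j - x i / ps i)) := by
    intro i
    have e1 : ∑ j, (q i j * x j - q j i * x i)
        = (∑ j, (q i j * ps j) * (x j / ps j)) - (∑ j, q i j * ps j) * (x i / ps i) := by
      rw [Finset.sum_sub_distrib]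
      congr 1
      · refine Finset.sum_congr rfl fun j _ => ?_
        rw [mul_assoc, mul_div_cancel₀ _ (hps' j)]
      · rw [← hcol i, Finset.sum_mul]
        refine Finset.sum_congr rfl fun j _ => ?_
        rw [mul_assoc, mul_div_cancel₀ _ (hps' i)]
    rw [e1, Finset.sum_mul, mul_sub, Finset.mul_sum, Finset.mul_sum,
      ← Finset.sum_sub_distrib]
    exact Finset.sum_congr rfl fun j _ => by ring
  calc ∑ i, f i * (∑ j ∈ Finset.univ.erase i, (q i j * x j - q j i * x i))
      = ∑ i, ∑ j, (q i j * ps j) * (f i * (x j / ps j - x i / ps i)) := by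
        refine Finset.sum_congr rfl fun i _ => ?_
        rw [herase i, key i]
    _ ≤ ∑ i, ∑ j, (q i j * ps j) * (g j - g i) := by
        refine Finset.sum_le_sum fun i _ => Finset.sum_le_sum fun j _ => ?_
        exact mul_le_mul_of_nonneg_left (hfg i j) (hann i j)
    _ = (∑ i, ∑ j, (q i j * ps j) * g j) - (∑ i, ∑ j, (q i j * ps j) * g i) := by
        rw [← Finset.sum_sub_distrib]
        exact Finset.sum_congr rfl fun i _ => by
          rw [← Finset.sum_sub_distrib]
          exact Finset.sum_congr rfl fun j _ => by ring
    _ = 0 := by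
        rw [Finset.sum_comm, sub_eq_zero]
        refine Finset.sum_congr rfl fun j _ => ?_
        calc ∑ i, q i j * ps j * g j = (∑ i, q i j * ps j) * g j :=
              (Finset.sum_mul _ _ _).symm
          _ = (∑ x, q j x * ps x) * g j := by rw [hcol j]
          _ = ∑ x, q j x * ps x * g j := Finset.sum_mul _ _ _

lemma deriv_le_zero_to_le {g : ℝ → ℝ} {g' : ℝ → ℝ}
    (hg : ∀ t ∈ Set.Icc (0:ℝ) 1, HasDerivAt g (g' t) t)
    (hle : ∀ t ∈ Set.Icc (0:ℝ) 1, g' t ≤ 0) : g 1 ≤ g 0 := by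
  have hsub : interior (Set.Icc (0:ℝ) 1) ⊆ Set.Icc 0 1 := interior_subset
  have h : AntitoneOn g (Set.Icc (0:ℝ) 1) := by
    refine antitoneOn_of_deriv_nonpos (convex_Icc _ _)
      (fun t ht => (hg t ht).continuousAt.continuousWithinAt)
      (fun t ht => ((hg t (hsub ht)).differentiableAt.differentiableWithinAt))
      (fun t ht => ?_)
    rw [(hg t (hsub ht)).deriv]
    exact hle t (hsub ht)
  exact h (Set.left_mem_Icc.2 zero_le_one) (Set.right_mem_Icc.2 zero_le_one) zero_le_one

lemma deriv_zero_to_eq {g : ℝ → ℝ} {g' : ℝ → ℝ}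
    (hg : ∀ t ∈ Set.Icc (0:ℝ) 1, HasDerivAt g (g' t) t)
    (hz : ∀ t ∈ Set.Icc (0:ℝ) 1, g' t = 0) : g 1 = g 0 := by
  refine le_antisymm (deriv_le_zero_to_le hg fun t ht => (hz t ht).le) ?_
  have := deriv_le_zero_to_le (g := fun t => -g t) (g' := fun t => -(g' t))
    (fun t ht => (hg t ht).neg) (fun t ht => by show -g' t ≤ 0; rw [hz t ht]; simp)
  simpa using this


def Phi {n : ℕ} (ps : Fin n → ℝ) (lam : ℝ) (x : Fin n → ℝ) : ℝ :=
  ∑ i, max (x i - lam * ps i) 0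

lemma markovPre_invariants {n : ℕ} (ps : Fin n → ℝ) (hps : ∀ i, 0 < ps i)
    {a b : Fin n → ℝ} (h : MarkovPre ps a b) :
    (∑ i, b i = ∑ i, a i) ∧ ∀ lam, Phi ps lam b ≤ Phi ps lam a := by
  obtain ⟨q, hq, hqd, hbal, p, hpa, hpb, hode⟩ := h
  have hps' : ∀ i, ps i ≠ 0 := fun i => (hps i).ne'
  constructor
  · have hg : ∀ t ∈ Set.Icc (0:ℝ) 1, HasDerivAt (fun s => ∑ i, p s i)
        (∑ i, ∑ j ∈ Finset.univ.erase i, (q i j * p t j - q j i * p t i)) t := by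
      intro t ht
      exact HasDerivAt.fun_sum fun i _ => hode t ht i
    have hz : ∀ t ∈ Set.Icc (0:ℝ) 1,
        (∑ i, ∑ j ∈ Finset.univ.erase i, (q i j * p t j - q j i * p t i)) = 0 := by
      intro t _
      have herase : ∀ i : Fin n, ∑ j ∈ Finset.univ.erase i,
          (q i j * p t j - q j i * p t i) = ∑ j, (q i j * p t j - q j i * p t i) :=
        fun i => Finset.sum_erase _ (by ring)
      calc (∑ i, ∑ j ∈ Finset.univ.erase i, (q i j * p t j - q j i * p t i))
          = ∑ i, ∑ j, (q i j * p t j - q j i * p t i) :=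
            Finset.sum_congr rfl fun i _ => herase i
        _ = (∑ i, ∑ j, q i j * p t j) - ∑ i, ∑ j, q j i * p t i := by
            rw [← Finset.sum_sub_distrib]
            exact Finset.sum_congr rfl fun i _ => Finset.sum_sub_distrib _ _
        _ = 0 := by rw [sub_eq_zero]; exact Finset.sum_comm.symm
    have := deriv_zero_to_eq hg hz
    rw [hpa, hpb] at this
    exact this
  · intro lam
    have main : ∀ ε : ℝ, 0 < ε → Phi ps lam b ≤ Phi ps lam a + ε * ∑ i, ps i := by
      intro ε hε
      have hderiv : ∀ t ∈ Set.Icc (0:ℝ) 1,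
          HasDerivAt (fun s => ∑ i, ps i * phi ε (p s i / ps i - lam))
          (∑ i, phi' ε (p t i / ps i - lam) *
            (∑ j ∈ Finset.univ.erase i, (q i j * p t j - q j i * p t i))) t := by
        intro t ht
        refine HasDerivAt.fun_sum fun i _ => ?_
        have h1 : HasDerivAt (fun s => p s i / ps i - lam)
            ((∑ j ∈ Finset.univ.erase i, (q i j * p t j - q j i * p t i)) / ps i) t :=
          ((hode t ht i).div_const (ps i)).sub_const lam
        have h2 := (phi_hasDerivAt ε hε.ne' (p t i / ps i - lam)).comp t h1
        have h3 := h2.const_mul (ps i)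
        have e : ∀ X D : ℝ, ps i * (X * (D / ps i)) = X * D := by
          intro X D
          rw [mul_comm X (D / ps i), ← mul_assoc, mul_comm (ps i) (D / ps i),
            div_mul_cancel₀ _ (hps' i), mul_comm]
        rw [e] at h3
        exact h3
      have hle : ∀ t ∈ Set.Icc (0:ℝ) 1,
          (∑ i, phi' ε (p t i / ps i - lam) *
            (∑ j ∈ Finset.univ.erase i, (q i j * p t j - q j i * p t i))) ≤ 0 := by
        intro t _
        refine dissipation ps hps q hq hqd hbal (p t)
          (fun i => phi' ε (p t i / ps i - lam))
          (fun i => phi ε (p t i / ps i - lam)) (fun i j => ?_)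
        have hgr := phi_grad ε hε.ne' (p t i / ps i - lam) (p t j / ps j - lam)
        have e : (p t j / ps j - lam) - (p t i / ps i - lam)
            = p t j / ps j - p t i / ps i := by ring
        rw [e] at hgr
        linarith
      have hG10 := deriv_le_zero_to_le hderiv hle
      have hmax : ∀ (c y : ℝ), 0 < c → c * max y 0 = max (c * y) 0 := by
        intro c y hc
        rcases le_total y 0 with h | h
        · rw [max_eq_right h, max_eq_right (by nlinarith), mul_zero]
        · rw [max_eq_left h, max_eq_left (by nlinarith)]
      have hlb : Phi ps lam b ≤ ∑ i, ps i * phi ε (p 1 i / ps i - lam) := by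
        rw [hpb, Phi]
        refine Finset.sum_le_sum fun i _ => ?_
        have e : ps i * (b i / ps i - lam) = b i - lam * ps i := by
          rw [mul_sub, mul_comm (ps i) (b i / ps i), div_mul_cancel₀ _ (hps' i), mul_comm (ps i) lam]
        calc max (b i - lam * ps i) 0 = ps i * max (b i / ps i - lam) 0 := by
              rw [hmax _ _ (hps i), e]
          _ ≤ ps i * phi ε (b i / ps i - lam) :=
              mul_le_mul_of_nonneg_left (phi_bounds ε hε.le _).1 (hps i).le
      have hub : (∑ i, ps i * phi ε (p 0 i / ps i - lam))
          ≤ Phi ps lam a + ε * ∑ i, ps i := by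
        rw [hpa, Phi, Finset.mul_sum, ← Finset.sum_add_distrib]
        refine Finset.sum_le_sum fun i _ => ?_
        have e : ps i * (a i / ps i - lam) = a i - lam * ps i := by
          rw [mul_sub, mul_comm (ps i) (a i / ps i), div_mul_cancel₀ _ (hps' i), mul_comm (ps i) lam]
        calc ps i * phi ε (a i / ps i - lam)
            ≤ ps i * (max (a i / ps i - lam) 0 + ε) :=
              mul_le_mul_of_nonneg_left (phi_bounds ε hε.le _).2 (hps i).le
          _ = max (a i - lam * ps i) 0 + ε * ps i := by
              rw [mul_add, hmax _ _ (hps i), e]; ring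
      linarith
    by_contra hcon
    push_neg at hcon
    have hC : (0:ℝ) ≤ ∑ i, ps i := Finset.sum_nonneg fun i _ => (hps i).le
    have hδpos : 0 < Phi ps lam b - Phi ps lam a := by linarith
    have h1 := main ((Phi ps lam b - Phi ps lam a) / ((∑ i, ps i) + 1))
      (div_pos hδpos (by linarith))
    have hlt : (Phi ps lam b - Phi ps lam a) / ((∑ i, ps i) + 1) * (∑ i, ps i)
        < Phi ps lam b - Phi ps lam a := by
      rw [div_mul_eq_mul_div, div_lt_iff₀ (by linarith)]
      nlinarith
    linarith


lemma transGen_invariants {n : ℕ} (ps : Fin n → ℝ) (hps : ∀ i, 0 < ps i)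
    {a b : Fin n → ℝ} (h : Relation.TransGen (MarkovPre ps) a b) :
    (∑ i, b i = ∑ i, a i) ∧ ∀ lam, Phi ps lam b ≤ Phi ps lam a := by
  induction h with
  | single hrel => exact markovPre_invariants ps hps hrel
  | tail _ hrel ih =>
    have h2 := markovPre_invariants ps hps hrel
    exact ⟨h2.1.trans ih.1, fun lam => (h2.2 lam).trans (ih.2 lam)⟩

lemma order_invariants {n : ℕ} (ps : Fin n → ℝ) (hps : ∀ i, 0 < ps i)
    {a b : Fin n → ℝ}
    (h : (a, b) ∈ closure {pr : (Fin n → ℝ) × (Fin n → ℝ) |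
      Relation.TransGen (MarkovPre ps) pr.1 pr.2}) :
    (∑ i, b i = ∑ i, a i) ∧ ∀ lam, Phi ps lam b ≤ Phi ps lam a := by
  have hc1 : Continuous fun pr : (Fin n → ℝ) × (Fin n → ℝ) => ∑ i, pr.2 i :=
    continuous_finset_sum _ fun i _ => (continuous_apply i).comp continuous_snd
  have hc2 : Continuous fun pr : (Fin n → ℝ) × (Fin n → ℝ) => ∑ i, pr.1 i :=
    continuous_finset_sum _ fun i _ => (continuous_apply i).comp continuous_fst
  have hcPhi : ∀ (lam : ℝ), Continuous fun x : Fin n → ℝ => Phi ps lam x := by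
    intro lam
    refine continuous_finset_sum _ fun i _ => ?_
    exact Continuous.max ((continuous_apply i).sub continuous_const) continuous_const
  have hclosed : IsClosed {pr : (Fin n → ℝ) × (Fin n → ℝ) |
      (∑ i, pr.2 i = ∑ i, pr.1 i) ∧ ∀ lam, Phi ps lam pr.2 ≤ Phi ps lam pr.1} := by
    refine IsClosed.inter (isClosed_eq hc1 hc2) ?_
    show IsClosed {pr : (Fin n → ℝ) × (Fin n → ℝ) |
      ∀ lam, Phi ps lam pr.2 ≤ Phi ps lam pr.1}
    rw [Set.setOf_forall]
    refine isClosed_iInter fun lam => ?_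
    exact isClosed_le ((hcPhi lam).comp continuous_snd) ((hcPhi lam).comp continuous_fst)
  have hsub : {pr : (Fin n → ℝ) × (Fin n → ℝ) |
      Relation.TransGen (MarkovPre ps) pr.1 pr.2} ⊆ {pr : (Fin n → ℝ) × (Fin n → ℝ) |
      (∑ i, pr.2 i = ∑ i, pr.1 i) ∧ ∀ lam, Phi ps lam pr.2 ≤ Phi ps lam pr.1} :=
    fun pr hpr => transGen_invariants ps hps hpr
  exact closure_minimal hsub hclosed h


lemma level_ineq {n : ℕ} (ps : Fin n → ℝ) (hps : ∀ i, 0 < ps i)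
    (p0 p1 : Fin n → ℝ) (hPhi : ∀ lam, Phi ps lam p1 ≤ Phi ps lam p0) (R : ℝ) :
    (∑ i ∈ Finset.univ.filter (fun i => R < p0 i / ps i), (p1 i - p0 i))
      + ∑ i ∈ Finset.univ.filter (fun i => p0 i / ps i = R), max (p1 i - p0 i) 0 ≤ 0 := by
  have hps' : ∀ i, ps i ≠ 0 := fun i => (hps i).ne'
  have h1 : Phi ps R p0 = ∑ i ∈ Finset.univ.filter (fun i => R < p0 i / ps i),
      (p0 i - R * ps i) := by
    rw [Phi, Finset.sum_filter]
    refine Finset.sum_congr rfl fun i _ => ?_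
    rcases lt_or_ge R (p0 i / ps i) with h | h
    · rw [if_pos h, max_eq_left]
      have := (lt_div_iff₀ (hps i)).1 h
      linarith
    · rw [if_neg (not_lt.2 h), max_eq_right]
      have := (div_le_iff₀ (hps i)).1 h
      linarith
  have h2 : ∑ i, ((if R < p0 i / ps i then p1 i - R * ps i else 0)
      + (if p0 i / ps i = R then max (p1 i - p0 i) 0 else 0)) ≤ Phi ps R p1 := by
    rw [Phi]
    refine Finset.sum_le_sum fun i _ => ?_
    rcases lt_trichotomy R (p0 i / ps i) with h | h | h
    · rw [if_pos h, if_neg (ne_of_gt h), add_zero]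
      exact le_max_left _ _
    · rw [if_neg (by rw [← h]; exact lt_irrefl R), if_pos h.symm, zero_add]
      have hpe : p0 i = R * ps i := (div_eq_iff (hps' i)).1 h.symm
      rw [hpe]
    · rw [if_neg (not_lt.2 h.le), if_neg (ne_of_lt h), add_zero]
      exact le_max_right _ _
  rw [Finset.sum_add_distrib] at h2
  have h4 : ∑ i, (if R < p0 i / ps i then p1 i - R * ps i else 0)
      = ∑ i ∈ Finset.univ.filter (fun i => R < p0 i / ps i), (p1 i - R * ps i) :=
    (Finset.sum_filter _ _).symm
  have h5 : ∑ i, (if p0 i / ps i = R then max (p1 i - p0 i) 0 else 0)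
      = ∑ i ∈ Finset.univ.filter (fun i => p0 i / ps i = R), max (p1 i - p0 i) 0 :=
    (Finset.sum_filter _ _).symm
  rw [h4, h5] at h2
  have h6 : ∑ i ∈ Finset.univ.filter (fun i => R < p0 i / ps i), (p1 i - R * ps i)
      = (∑ i ∈ Finset.univ.filter (fun i => R < p0 i / ps i), (p0 i - R * ps i))
        + ∑ i ∈ Finset.univ.filter (fun i => R < p0 i / ps i), (p1 i - p0 i) := by
    rw [← Finset.sum_add_distrib]
    exact Finset.sum_congr rfl fun i _ => by ring
  have h7 := hPhi R
  rw [h1] at h7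
  rw [h6] at h2
  linarith


lemma construct_core {n : ℕ} (r v : Fin n → ℝ)
    (hLI : ∀ R : ℝ, (∑ i ∈ Finset.univ.filter (fun i => R < r i), v i)
      + (∑ i ∈ Finset.univ.filter (fun i => r i = R), max (v i) 0) ≤ 0)
    (hvsum : ∑ i, v i = 0) :
    ∃ w : Fin n → Fin n → ℝ, (∀ i j, 0 ≤ w i j) ∧
      ∀ l, v l = ∑ i, ∑ j ∈ Finset.univ.filter (fun j => j < i),
        (w i j * Real.sign (r j - r i)) *
          ((if l = i then (1 : ℝ) else 0) - if l = j then 1 else 0) := by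
  classical
  set d : Fin n → ℝ := fun i => max (v i) 0 with hd
  set u : Fin n → ℝ := fun i => max (-v i) 0 with hu
  have hdnn : ∀ i, 0 ≤ d i := fun i => le_max_right _ _
  have hunn : ∀ i, 0 ≤ u i := fun i => le_max_right _ _
  have hduv : ∀ i, d i - u i = v i := fun i => max_zero_sub_max_neg_zero_eq_self (v i)
  have htot : ∑ i, d i = ∑ i, u i := by
    have h0 : ∑ i, (d i - u i) = 0 := by
      rw [Finset.sum_congr rfl fun i _ => hduv i]; exact hvsum
    rw [Finset.sum_sub_distrib] at h0
    linarith
  set key : Fin n → ℝ ×ₗ (Fin n) := fun i => toLex (-(r i), i) with hkey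
  set σ : Equiv.Perm (Fin n) := Tuple.sort key with hσ
  have hmono : Monotone (key ∘ σ) := Tuple.monotone_sort key
  have hstrict : StrictMono (key ∘ σ) := by
    refine hmono.strictMono_of_injective ?_
    intro x y hxy
    have h2 : (ofLex (key (σ x))).2 = (ofLex (key (σ y))).2 := by
      simp only [Function.comp] at hxy
      rw [hxy]
    simp only [hkey] at h2
    exact σ.injective h2
  have hK1 : ∀ x y : Fin n, x ≤ y → r (σ y) ≤ r (σ x) := by
    intro x y hxy
    have h := hmono hxy
    simp only [Function.comp, hkey] at h
    rcases Prod.Lex.le_iff.1 h with h' | h'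
    · simp only [ofLex_toLex] at h'
      linarith
    · have := h'.1
      simp only [ofLex_toLex] at this
      linarith [this.le]
  have hK2 : ∀ i j : Fin n, r j < r i → σ.symm i < σ.symm j := by
    intro i j hij
    have hkij : key i < key j := by
      simp only [hkey]
      exact Prod.Lex.lt_iff.2 (Or.inl (by simp only [ofLex_toLex]; linarith))
    have h : (key ∘ σ) (σ.symm i) < (key ∘ σ) (σ.symm j) := by
      simp only [Function.comp, Equiv.apply_symm_apply]
      exact hkij
    exact hstrict.lt_iff_lt.1 h
  -- cumulative sums in sorted order
  set SU : ℕ → ℝ := fun t => ∑ m ∈ Finset.univ.filter (fun m : Fin n => (m:ℕ) < t), u (σ m)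
    with hSU
  set SD : ℕ → ℝ := fun t => ∑ m ∈ Finset.univ.filter (fun m : Fin n => (m:ℕ) < t), d (σ m)
    with hSD
  have hsucc : ∀ (f : Fin n → ℝ) (m : Fin n),
      ∑ x ∈ Finset.univ.filter (fun x : Fin n => (x:ℕ) < (m:ℕ)+1), f x
      = (∑ x ∈ Finset.univ.filter (fun x : Fin n => (x:ℕ) < (m:ℕ)), f x) + f m := by
    intro f m
    have hins : Finset.univ.filter (fun x : Fin n => (x:ℕ) < (m:ℕ)+1)
        = insert m (Finset.univ.filter (fun x : Fin n => (x:ℕ) < (m:ℕ))) := by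
      ext x
      simp only [Finset.mem_filter, Finset.mem_insert, Finset.mem_univ, true_and]
      rw [Nat.lt_succ_iff_lt_or_eq, Fin.val_eq_val]
      tauto
    rw [hins, Finset.sum_insert (by simp)]
    ring
  have hmono_sum : ∀ (f : Fin n → ℝ), (∀ i, 0 ≤ f i) → ∀ {s t : ℕ}, s ≤ t →
      (∑ m ∈ Finset.univ.filter (fun m : Fin n => (m:ℕ) < s), f m)
      ≤ ∑ m ∈ Finset.univ.filter (fun m : Fin n => (m:ℕ) < t), f m := by
    intro f hf s t hst
    refine Finset.sum_le_sum_of_subset_of_nonneg ?_ (fun m _ _ => hf m)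
    intro m hm
    simp only [Finset.mem_filter, Finset.mem_univ, true_and] at hm ⊢
    omega
  have hSUmono : ∀ {s t : ℕ}, s ≤ t → SU s ≤ SU t :=
    fun {s t} h => hmono_sum (fun m => u (σ m)) (fun m => hunn _) h
  have hSDmono : ∀ {s t : ℕ}, s ≤ t → SD s ≤ SD t :=
    fun {s t} h => hmono_sum (fun m => d (σ m)) (fun m => hdnn _) h
  have hSU0 : SU 0 = 0 := by
    rw [hSU]
    simp
  have hSDnn : ∀ t, 0 ≤ SD t := fun t => Finset.sum_nonneg fun m _ => hdnn _
  have hfull : ∀ (f : Fin n → ℝ),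
      (∑ m ∈ Finset.univ.filter (fun m : Fin n => (m:ℕ) < n), f (σ m)) = ∑ i, f i := by
    intro f
    rw [Finset.filter_true_of_mem (fun m _ => m.isLt)]
    exact Equiv.sum_comp σ f
  have hSUn : SU n = ∑ i, u i := hfull u
  have hSDn : SD n = ∑ i, d i := hfull d
  have hUD : SU n = SD n := by rw [hSUn, hSDn, htot]
  have hreindex : ∀ (P : Fin n → Prop) [DecidablePred P] (f : Fin n → ℝ),
      (∑ x ∈ Finset.univ.filter (fun x => P (σ x)), f (σ x))
      = ∑ m ∈ Finset.univ.filter (fun m => P m), f m := by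
    intro P _ f
    rw [Finset.sum_filter, Finset.sum_filter]
    exact Equiv.sum_comp σ (fun m => if P m then f m else 0)
  have hclamp : ∀ A B x y : ℝ, A ≤ B → x ≤ y →
      max 0 (min B y - max A x) = min B (max A y) - min B (max A x) := by
    intro A B x y hAB hxy
    rcases le_total y A with h1 | h1
    · rw [max_eq_left (hxy.trans h1), max_eq_left h1, min_eq_right hAB, sub_self,
        max_eq_left (sub_nonpos.2 ((min_le_right B y).trans h1))]
    · rcases le_total B x with h2 | h2
      · rw [min_eq_left (h2.trans (le_max_right A x)),
          min_eq_left ((h2.trans hxy).trans (le_max_right A y)), sub_self,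
          max_eq_left (sub_nonpos.2 ((min_le_left B y).trans (h2.trans (le_max_right A x))))]
      · rw [max_eq_right h1, min_eq_right (max_le hAB h2),
          max_eq_right (sub_nonneg.2 (le_min (max_le hAB h2) (max_le h1 hxy)))]
  set F : ℕ → ℕ → ℝ :=
    fun k l => max 0 (min (SD (k+1)) (SU (l+1)) - max (SD k) (SU l)) with hF
  have hFnn : ∀ k l, 0 ≤ F k l := fun k l => le_max_left _ _
  have hrow : ∀ i : Fin n, (∑ j : Fin n, F ((σ.symm i : Fin n) : ℕ) ((σ.symm j : Fin n) : ℕ)) = d i := by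
    intro i
    set k : ℕ := ((σ.symm i : Fin n) : ℕ) with hkdef
    have hkn : k < n := (σ.symm i).isLt
    have hstep : ∀ l : ℕ, F k l
        = min (SD (k+1)) (max (SD k) (SU (l+1))) - min (SD (k+1)) (max (SD k) (SU l)) :=
      fun l => hclamp _ _ _ _ (hSDmono (Nat.le_succ _)) (hSUmono (Nat.le_succ _))
    have hc1 : (∑ j : Fin n, F k ((σ.symm j : Fin n) : ℕ)) = ∑ x : Fin n, F k (x : ℕ) :=
      Equiv.sum_comp σ.symm (fun x : Fin n => F k (x : ℕ))
    have hc2 : (∑ x : Fin n, F k (x : ℕ)) = ∑ l ∈ Finset.range n, F k l :=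
      Fin.sum_univ_eq_sum_range (fun l => F k l) n
    have hc3 : (∑ l ∈ Finset.range n, F k l)
        = min (SD (k+1)) (max (SD k) (SU n)) - min (SD (k+1)) (max (SD k) (SU 0)) := by
      rw [Finset.sum_congr rfl fun l _ => hstep l]
      exact Finset.sum_range_sub (fun t => min (SD (k+1)) (max (SD k) (SU t))) n
    have he1 : max (SD k) (SU 0) = SD k := by rw [hSU0]; exact max_eq_left (hSDnn k)
    have he2 : min (SD (k+1)) (SD k) = SD k := min_eq_right (hSDmono (Nat.le_succ _))
    have he3 : max (SD k) (SU n) = SU n := by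
      rw [hUD]; exact max_eq_right (hSDmono hkn.le)
    have he4 : min (SD (k+1)) (SD n) = SD (k+1) := min_eq_left (hSDmono hkn)
    have he5 : SD (k+1) = SD k + d (σ (σ.symm i)) := hsucc (fun m => d (σ m)) (σ.symm i)
    rw [hc1, hc2, hc3, he1, he2, he3, hUD, he4, he5, Equiv.apply_symm_apply]
    ring
  have hcol : ∀ j : Fin n, (∑ i : Fin n, F ((σ.symm i : Fin n) : ℕ) ((σ.symm j : Fin n) : ℕ)) = u j := by
    intro j
    set l : ℕ := ((σ.symm j : Fin n) : ℕ) with hldef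
    have hln : l < n := (σ.symm j).isLt
    have hFswap : ∀ k t : ℕ, F k t
        = max 0 (min (SU (t+1)) (SD (k+1)) - max (SU t) (SD k)) := by
      intro k t
      simp only [hF]
      rw [min_comm (SD (k+1)) (SU (t+1)), max_comm (SD k) (SU t)]
    have hstep : ∀ k : ℕ, F k l
        = min (SU (l+1)) (max (SU l) (SD (k+1))) - min (SU (l+1)) (max (SU l) (SD k)) := by
      intro k
      rw [hFswap k l]
      exact hclamp _ _ _ _ (hSUmono (Nat.le_succ _)) (hSDmono (Nat.le_succ _))
    have hc1 : (∑ i : Fin n, F ((σ.symm i : Fin n) : ℕ) l) = ∑ x : Fin n, F (x : ℕ) l :=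
      Equiv.sum_comp σ.symm (fun x : Fin n => F (x : ℕ) l)
    have hc2 : (∑ x : Fin n, F (x : ℕ) l) = ∑ k ∈ Finset.range n, F k l :=
      Fin.sum_univ_eq_sum_range (fun k => F k l) n
    have hc3 : (∑ k ∈ Finset.range n, F k l)
        = min (SU (l+1)) (max (SU l) (SD n)) - min (SU (l+1)) (max (SU l) (SD 0)) := by
      rw [Finset.sum_congr rfl fun k _ => hstep k]
      exact Finset.sum_range_sub (fun t => min (SU (l+1)) (max (SU l) (SD t))) n
    have hSD0 : SD 0 = 0 := by rw [hSD]; simp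
    have hSUnn : ∀ t, 0 ≤ SU t := fun t => Finset.sum_nonneg fun m _ => hunn _
    have he1 : max (SU l) (SD 0) = SU l := by rw [hSD0]; exact max_eq_left (hSUnn l)
    have he2 : min (SU (l+1)) (SU l) = SU l := min_eq_right (hSUmono (Nat.le_succ _))
    have he3 : max (SU l) (SD n) = SD n := by
      rw [← hUD]; exact max_eq_right (hSUmono hln.le)
    have he4 : min (SU (l+1)) (SU n) = SU (l+1) := min_eq_left (hSUmono hln)
    have he5 : SU (l+1) = SU l + u (σ (σ.symm j)) := hsucc (fun m => u (σ m)) (σ.symm j)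
    rw [hc1, hc2, hc3, he1, he2, he3, ← hUD, he4, he5, Equiv.apply_symm_apply]
    ring
  have hvanish : ∀ i j : Fin n, ¬ (r i < r j) →
      F ((σ.symm i : Fin n) : ℕ) ((σ.symm j : Fin n) : ℕ) = 0 := by
    intro i j hij
    set R : ℝ := r j with hR
    have hAle : SD (((σ.symm i : Fin n) : ℕ) + 1) ≤ SU ((σ.symm j : Fin n) : ℕ) := by
      have hstep1 : SD (((σ.symm i : Fin n) : ℕ) + 1)
          ≤ ∑ m ∈ Finset.univ.filter (fun m => R ≤ r m), d m := by
        have hsubset : Finset.univ.filter (fun x : Fin n => (x:ℕ) < ((σ.symm i : Fin n) : ℕ) + 1)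
            ⊆ Finset.univ.filter (fun x : Fin n => R ≤ r (σ x)) := by
          intro x hx
          simp only [Finset.mem_filter, Finset.mem_univ, true_and] at hx ⊢
          have hxk : x ≤ σ.symm i := by
            rw [Fin.le_def]
            omega
          have := hK1 x (σ.symm i) hxk
          rw [Equiv.apply_symm_apply] at this
          have hri : R ≤ r i := not_lt.1 hij
          linarith
        calc SD (((σ.symm i : Fin n) : ℕ) + 1)
            ≤ ∑ x ∈ Finset.univ.filter (fun x : Fin n => R ≤ r (σ x)), d (σ x) :=
              Finset.sum_le_sum_of_subset_of_nonneg hsubset (fun m _ _ => hdnn _)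
          _ = ∑ m ∈ Finset.univ.filter (fun m => R ≤ r m), d m :=
              hreindex (fun m => R ≤ r m) (fun m => d m)
      have hstep2 : (∑ m ∈ Finset.univ.filter (fun m => R < r m), u m)
          ≤ SU ((σ.symm j : Fin n) : ℕ) := by
        have := hreindex (fun m => R < r m) (fun m => u m)
        rw [← this]
        refine Finset.sum_le_sum_of_subset_of_nonneg ?_ (fun m _ _ => hunn _)
        intro x hx
        simp only [Finset.mem_filter, Finset.mem_univ, true_and] at hx ⊢
        have := hK2 (σ x) j hx
        rw [Equiv.symm_apply_apply] at this
        exact this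
      have hstep3 : (∑ m ∈ Finset.univ.filter (fun m => R ≤ r m), d m)
          ≤ ∑ m ∈ Finset.univ.filter (fun m => R < r m), u m := by
        have hsplit : (∑ m ∈ Finset.univ.filter (fun m => R ≤ r m), d m)
            = (∑ m ∈ Finset.univ.filter (fun m => R < r m), d m)
              + ∑ m ∈ Finset.univ.filter (fun m => r m = R), d m := by
          rw [Finset.sum_filter, Finset.sum_filter, Finset.sum_filter,
            ← Finset.sum_add_distrib]
          refine Finset.sum_congr rfl fun m _ => ?_
          rcases lt_trichotomy R (r m) with h | h | h
          · rw [if_pos h.le, if_pos h, if_neg (ne_of_gt h), add_zero]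
          · rw [if_pos h.le, if_neg (by rw [← h]; exact lt_irrefl R), if_pos h.symm, zero_add]
          · rw [if_neg (not_le.2 h), if_neg (not_lt.2 h.le), if_neg (ne_of_lt h), add_zero]
        have hdvu : (∑ m ∈ Finset.univ.filter (fun m => R < r m), d m)
            = (∑ m ∈ Finset.univ.filter (fun m => R < r m), v m)
              + ∑ m ∈ Finset.univ.filter (fun m => R < r m), u m := by
          rw [← Finset.sum_add_distrib]
          refine Finset.sum_congr rfl fun m _ => ?_
          have := hduv m
          linarith
        have hLIR := hLI R
        rw [hsplit, hdvu]
        have : (∑ m ∈ Finset.univ.filter (fun m => r m = R), d m)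
            = ∑ i ∈ Finset.univ.filter (fun i => r i = R), max (v i) 0 :=
          Finset.sum_congr rfl fun m _ => rfl
        rw [this]
        linarith
      linarith
    rw [hF]
    simp only []
    have h1 : min (SD (((σ.symm i : Fin n) : ℕ)+1)) (SU (((σ.symm j : Fin n) : ℕ)+1))
        - max (SD ((σ.symm i : Fin n) : ℕ)) (SU ((σ.symm j : Fin n) : ℕ)) ≤ 0 := by
      have h2 := min_le_left (SD (((σ.symm i : Fin n) : ℕ)+1)) (SU (((σ.symm j : Fin n) : ℕ)+1))
      have h3 := le_max_right (SD ((σ.symm i : Fin n) : ℕ)) (SU ((σ.symm j : Fin n) : ℕ))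
      linarith
    exact max_eq_left h1

  set W : Fin n → Fin n → ℝ := fun i j =>
    F ((σ.symm i : Fin n) : ℕ) ((σ.symm j : Fin n) : ℕ)
      + F ((σ.symm j : Fin n) : ℕ) ((σ.symm i : Fin n) : ℕ) with hW
  set E : Fin n → Fin n → ℝ := fun i j =>
    F ((σ.symm i : Fin n) : ℕ) ((σ.symm j : Fin n) : ℕ)
      - F ((σ.symm j : Fin n) : ℕ) ((σ.symm i : Fin n) : ℕ) with hE
  have hWpair : ∀ i j : Fin n, W i j * Real.sign (r j - r i) = E i j := by
    intro i j
    simp only [hW, hE]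
    rcases lt_trichotomy (r i) (r j) with h | h | h
    · rw [Real.sign_of_pos (by linarith : (0:ℝ) < r j - r i),
        hvanish j i (not_lt.2 h.le)]
      ring
    · rw [show r j - r i = 0 by rw [h, sub_self], Real.sign_zero,
        hvanish i j (by rw [h]; exact lt_irrefl _),
        hvanish j i (by rw [h]; exact lt_irrefl _)]
      ring
    · rw [Real.sign_of_neg (by linarith : r j - r i < 0),
        hvanish i j (not_lt.2 h.le)]
      ring
  have hEanti : ∀ i j : Fin n, E i j = - E j i := by
    intro i j
    simp only [hE]
    ring
  refine ⟨W, fun i j => add_nonneg (hFnn _ _) (hFnn _ _), ?_⟩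
  intro l
  have hmain : (∑ i, ∑ j ∈ Finset.univ.filter (fun j => j < i),
      (W i j * Real.sign (r j - r i)) *
        ((if l = i then (1 : ℝ) else 0) - if l = j then 1 else 0)) = v l := by
    have hstep1 : (∑ i, ∑ j ∈ Finset.univ.filter (fun j => j < i),
        (W i j * Real.sign (r j - r i)) *
          ((if l = i then (1 : ℝ) else 0) - if l = j then 1 else 0))
        = (∑ i, ∑ j ∈ Finset.univ.filter (fun j => j < i),
          (E i j * (if l = i then (1 : ℝ) else 0) - E i j * (if l = j then (1:ℝ) else 0))) := by
      refine Finset.sum_congr rfl fun i _ => Finset.sum_congr rfl fun j _ => ?_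
      rw [hWpair i j]
      ring
    rw [hstep1]
    have hstep2 : (∑ i, ∑ j ∈ Finset.univ.filter (fun j => j < i),
        (E i j * (if l = i then (1 : ℝ) else 0) - E i j * (if l = j then (1:ℝ) else 0)))
        = (∑ i, ∑ j ∈ Finset.univ.filter (fun j => j < i), E i j * (if l = i then (1 : ℝ) else 0))
          - ∑ i, ∑ j ∈ Finset.univ.filter (fun j => j < i), E i j * (if l = j then (1:ℝ) else 0) := by
      rw [← Finset.sum_sub_distrib]
      exact Finset.sum_congr rfl fun i _ => Finset.sum_sub_distrib _ _
    rw [hstep2]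
    have hfirst : (∑ i, ∑ j ∈ Finset.univ.filter (fun j => j < i),
        E i j * (if l = i then (1 : ℝ) else 0))
        = ∑ j ∈ Finset.univ.filter (fun j => j < l), E l j := by
      have h1 : ∀ i : Fin n, (∑ j ∈ Finset.univ.filter (fun j => j < i),
          E i j * (if l = i then (1 : ℝ) else 0))
          = if l = i then (∑ j ∈ Finset.univ.filter (fun j => j < i), E i j) else 0 := by
        intro i
        rcases eq_or_ne l i with h | h
        · subst h
          simp
        · simp [if_neg h, Ne.symm h]
      rw [Finset.sum_congr rfl fun i _ => h1 i, Finset.sum_ite_eq Finset.univ l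
        (fun i => ∑ j ∈ Finset.univ.filter (fun j => j < i), E i j), if_pos (Finset.mem_univ l)]
    have hsecond : (∑ i, ∑ j ∈ Finset.univ.filter (fun j => j < i),
        E i j * (if l = j then (1:ℝ) else 0))
        = ∑ i ∈ Finset.univ.filter (fun i => l < i), E i l := by
      have h1 : ∀ i : Fin n, (∑ j ∈ Finset.univ.filter (fun j => j < i),
          E i j * (if l = j then (1:ℝ) else 0)) = if l < i then E i l else 0 := by
        intro i
        have h2 : (∑ j ∈ Finset.univ.filter (fun j => j < i),
            E i j * (if l = j then (1:ℝ) else 0))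
            = ∑ j ∈ Finset.univ.filter (fun j => j < i), (if l = j then E i j else 0) :=
          Finset.sum_congr rfl fun j _ => by
            rcases eq_or_ne l j with h | h
            · subst h
              simp
            · simp [if_neg h]
        rw [h2, Finset.sum_ite_eq (Finset.univ.filter (fun j => j < i)) l (fun j => E i j)]
        by_cases h3 : l < i
        · rw [if_pos (by simp [h3]), if_pos h3]
        · rw [if_neg (by simp [h3]), if_neg h3]
      rw [Finset.sum_congr rfl fun i _ => h1 i, ← Finset.sum_filter]
    rw [hfirst, hsecond]
    have hneg : (∑ i ∈ Finset.univ.filter (fun i => l < i), E i l)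
        = - ∑ i ∈ Finset.univ.filter (fun i => l < i), E l i := by
      rw [← Finset.sum_neg_distrib]
      exact Finset.sum_congr rfl fun i _ => hEanti i l
    rw [hneg, sub_neg_eq_add]
    have hdecomp : (∑ j : Fin n, E l j)
        = (∑ j ∈ Finset.univ.filter (fun j => j < l), E l j)
          + ∑ j ∈ Finset.univ.filter (fun j => l < j), E l j := by
      have h1 := Finset.sum_filter_add_sum_filter_not Finset.univ (fun j => j < l) (E l)
      have h2 : Finset.univ.filter (fun j : Fin n => ¬ j < l)
          = insert l (Finset.univ.filter (fun j => l < j)) := by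
        ext x
        simp only [Finset.mem_filter, Finset.mem_univ, true_and, Finset.mem_insert, not_lt]
        rw [le_iff_lt_or_eq]
        constructor
        · rintro (h | h)
          · exact Or.inr h
          · exact Or.inl h.symm
        · rintro (h | h)
          · exact Or.inr h.symm
          · exact Or.inl h
      rw [h2, Finset.sum_insert (by simp)] at h1
      have hEll : E l l = 0 := by simp only [hE]; ring
      rw [hEll] at h1
      linarith [h1]
    rw [← hdecomp]
    have hEl : (∑ j : Fin n, E l j) = d l - u l := by
      simp only [hE]
      rw [Finset.sum_sub_distrib, hrow l, hcol l]
    rw [hEl]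
    exact hduv l
  exact hmain.symm

end MOAux

/-- If `P⁰ ≻_{P*} P¹` then `P¹ − P⁰` lies in the cone
`Q(P⁰,P*) = cone{(eᵢ−e_j)·sign(p⁰_j/p*_j − p⁰ᵢ/p*ᵢ) : i > j}` of possible
Markov velocities at `P⁰`. -/
theorem markov_order_subset_velocity_cone
    (n : ℕ) (ps : Fin n → ℝ) (hps : ∀ i, 0 < ps i)
    (p0 p1 : Fin n → ℝ) (hp0 : ∀ i, 0 < p0 i) (hp01 : ∑ i, p0 i = 1)
    (horder : MarkovOrder ps p0 p1) :
    ∃ w : Fin n → Fin n → ℝ, (∀ i j, 0 ≤ w i j) ∧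
      p1 - p0 = ∑ i, ∑ j ∈ Finset.univ.filter (fun j => j < i),
        (w i j * Real.sign (p0 j / ps j - p0 i / ps i)) •
          (fun l => (if l = i then (1 : ℝ) else 0) - if l = j then 1 else 0) := by
  obtain ⟨hsum, hPhi⟩ := MOAux.order_invariants ps hps horder
  have hvsum : ∑ i, (p1 i - p0 i) = 0 := by
    rw [Finset.sum_sub_distrib, hsum, sub_self]
  have hLI : ∀ R : ℝ, (∑ i ∈ Finset.univ.filter (fun i => R < p0 i / ps i), (p1 i - p0 i))
      + (∑ i ∈ Finset.univ.filter (fun i => p0 i / ps i = R), max (p1 i - p0 i) 0) ≤ 0 :=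
    fun R => MOAux.level_ineq ps hps p0 p1 hPhi R
  obtain ⟨w, hw, hrep⟩ := MOAux.construct_core (fun i => p0 i / ps i)
    (fun i => p1 i - p0 i) hLI hvsum
  refine ⟨w, hw, ?_⟩
  funext l
  have h := hrep l
  have hexp : (∑ i, ∑ j ∈ Finset.univ.filter (fun j => j < i),
      (w i j * Real.sign (p0 j / ps j - p0 i / ps i)) •
        (fun l : Fin n => (if l = i then (1:ℝ) else 0) - if l = j then 1 else 0)) l
      = ∑ i, ∑ j ∈ Finset.univ.filter (fun j => j < i),
        (w i j * Real.sign (p0 j / ps j - p0 i / ps i)) *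
          ((if l = i then (1:ℝ) else 0) - if l = j then 1 else 0) := by
    rw [Finset.sum_apply]
    refine Finset.sum_congr rfl fun i _ => ?_
    rw [Finset.sum_apply]
    refine Finset.sum_congr rfl fun j _ => ?_
    rw [Pi.smul_apply, smul_eq_mul]
  rw [Pi.sub_apply, hexp]
  exact h
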